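/- If G is a slightly regular network (i.e., the vector w = k - (vol(G)/n)·1 is an eigenvector of the combinatorial Laplacian L_G with eigenvalue γ), then Kemeny's constant satisfies K(G) = tr(L_G^# D) - (γ^#/vol(G))·(‖k‖² - vol(G)²/n), where γ^# = 1/γ if γ ≠ 0 and 0 otherwise. -/

import Mathlib

open Matrix Finset

/-- If `G` is a slightly regular network (`w = k - (vol/n)·1` is an eigenvector of the
combinatorial Laplacian `L = D - c` with eigenvalue `γ`), then Kemeny's constant
`K(G) = tr(L^# D) - (1/vol) kᵀ L^# k` equals
`tr(L^# D) - (γ^#/vol)(‖k‖² - vol²/n)`, where `γ^# = 1/γ` if `γ ≠ 0` and `0` otherwise. -/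
theorem kemeny_slightly_regular {n : ℕ} (hn : 0 < n)
    (c : Matrix (Fin n) (Fin n) ℝ) (hsym : c.IsSymm) (hnonneg : ∀ i j, 0 ≤ c i j)
    (k : Fin n → ℝ) (hk : ∀ i, k i = ∑ j, c i j)
    (vol : ℝ) (hvol : vol = ∑ i, k i) (hvolpos : 0 < vol)
    (L Lp : Matrix (Fin n) (Fin n) ℝ)
    (hL : L = Matrix.diagonal k - c)
    (hg1 : L * Lp * L = L) (hg2 : Lp * L * Lp = Lp) (hg3 : L * Lp = Lp * L)
    -- connectivity: the kernel of the Laplacian is spanned by the all-ones vector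
    (hconn : ∀ z : Fin n → ℝ, L.mulVec z = 0 ↔ ∃ t : ℝ, z = fun _ => t)
    (w : Fin n → ℝ) (hw : w = fun i => k i - vol / n)
    (γ : ℝ) (heig : L.mulVec w = γ • w) :
    (Lp * Matrix.diagonal k).trace - (1 / vol) * (k ⬝ᵥ Lp.mulVec k)
      = (Lp * Matrix.diagonal k).trace
        - ((if γ = 0 then (0:ℝ) else 1/γ) / vol) * ((∑ i, (k i)^2) - vol^2 / n) := by
  have hne : (n:ℝ) ≠ 0 := Nat.cast_ne_zero.mpr hn.ne'
  -- L annihilates the all-ones vector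
  have hL1 : L.mulVec (fun _ => (1:ℝ)) = 0 := by
    funext i
    simp [hL, Matrix.sub_mulVec, Matrix.mulVec, dotProduct, ← hk i,
      Matrix.diagonal_apply, Finset.sum_ite_eq]
  -- column sums of L vanish
  have h1L : Matrix.vecMul (fun _ => (1:ℝ)) L = 0 := by
    funext j
    have hcj : ∑ i, c i j = k j := by
      rw [hk j]
      exact Finset.sum_congr rfl fun i _ => hsym.apply j i
    simp [hL, Matrix.vecMul, dotProduct, Matrix.sub_apply, Finset.sum_sub_distrib,
      Matrix.diagonal_apply, Finset.sum_ite_eq, hcj]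
  -- Lp annihilates the all-ones vector
  have hLp1 : Lp.mulVec (fun _ => (1:ℝ)) = 0 := by
    obtain ⟨t, ht⟩ := (hconn (Lp.mulVec fun _ => 1)).mp (by
      rw [Matrix.mulVec_mulVec, hg3, ← Matrix.mulVec_mulVec, hL1, Matrix.mulVec_zero])
    have h2 : Lp.mulVec (fun _ => (1:ℝ)) = (Lp * L * Lp).mulVec (fun _ => 1) := by rw [hg2]
    rw [h2, ← Matrix.mulVec_mulVec, ← Matrix.mulVec_mulVec, ht]
    have : (fun _ : Fin n => t) = t • (fun _ : Fin n => (1:ℝ)) := by funext i; simp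
    rw [this, Matrix.mulVec_smul, hL1, smul_zero, Matrix.mulVec_zero]
  -- sum of w is zero
  have hsumw : ∑ i, w i = 0 := by
    simp [hw, Finset.sum_sub_distrib, ← hvol]
    field_simp
    ring
  -- k = w + (vol/n) • 1
  have hkw : k = w + (vol / n) • (fun _ => (1:ℝ)) := by
    funext i; simp [hw]
  -- k ⬝ᵥ w = ∑ k² - vol²/n
  have hkdw : k ⬝ᵥ w = (∑ i, (k i)^2) - vol^2 / n := by
    simp [hw, dotProduct, mul_sub, Finset.sum_sub_distrib, ← Finset.sum_mul, ← hvol, sq]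
    ring
  by_cases hγ : γ = 0
  · -- w is in the kernel, hence w = 0 and k is constant
    obtain ⟨t, ht⟩ := (hconn w).mp (by rw [heig, hγ, zero_smul])
    have ht0 : t = 0 := by
      have : (n : ℝ) * t = 0 := by rw [ht] at hsumw; simpa using hsumw
      exact (mul_eq_zero.mp this).resolve_left hne
    have hw0 : w = 0 := by rw [ht, ht0]; rfl
    have hkconst : k = (vol / n) • (fun _ => (1:ℝ)) := by rw [hkw, hw0, zero_add]
    have hLpk : Lp.mulVec k = 0 := by
      rw [hkconst, Matrix.mulVec_smul, hLp1, smul_zero]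
    have hsumsq : (∑ i, (k i)^2) = vol^2 / n := by
      rw [hkconst]; simp [sq]; field_simp
    rw [hLpk, hγ]
    simp [hsumsq]
  · -- γ ≠ 0
    have hLpLw : (Lp * L).mulVec w = w := by
      obtain ⟨t, ht⟩ := (hconn ((Lp * L).mulVec w - w)).mp (by
        rw [Matrix.mulVec_sub, Matrix.mulVec_mulVec, ← Matrix.mul_assoc, hg1, sub_self])
      have h1 : (fun _ : Fin n => (1:ℝ)) ⬝ᵥ ((Lp * L).mulVec w) = 0 := by
        rw [← hg3, Matrix.dotProduct_mulVec, ← Matrix.vecMul_vecMul, h1L,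
          Matrix.zero_vecMul, zero_dotProduct]
      have h2 : (fun _ : Fin n => (1:ℝ)) ⬝ᵥ ((Lp * L).mulVec w - w) = (n : ℝ) * t := by
        rw [ht]; simp [dotProduct, mul_comm]
      have h3 : (fun _ : Fin n => (1:ℝ)) ⬝ᵥ w = 0 := by simpa [dotProduct] using hsumw
      have ht0 : t = 0 := by
        rw [dotProduct_sub, h1, h3, sub_zero] at h2
        exact ((mul_eq_zero.mp h2.symm).resolve_left hne)
      have h4 : (Lp * L).mulVec w - w = 0 := by rw [ht, ht0]; funext i; rfl
      exact sub_eq_zero.mp h4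
    have hLpw : Lp.mulVec w = γ⁻¹ • w := by
      have h5 : Lp.mulVec (L.mulVec w) = γ • Lp.mulVec w := by
        rw [heig, Matrix.mulVec_smul]
      rw [Matrix.mulVec_mulVec, hLpLw] at h5
      conv_rhs => rw [h5]
      rw [smul_smul, inv_mul_cancel₀ hγ, one_smul]
    have hLpk : Lp.mulVec k = γ⁻¹ • w := by
      rw [hkw, Matrix.mulVec_add, Matrix.mulVec_smul, hLp1, smul_zero, add_zero, hLpw]
    have hdot : k ⬝ᵥ Lp.mulVec k = γ⁻¹ * ((∑ i, (k i)^2) - vol^2 / n) := by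
      rw [hLpk, dotProduct_smul, hkdw]; rfl
    rw [hdot, if_neg hγ]
    field_simp
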